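/- arXiv:2506.11265 — 3 statements merged into one kernel-verified Lean document; each statement's English description precedes it below -/
import Mathlib

section
/- Let G and G' be distinct spanning trees of K_{n,d} and let e ∈ G and e' ∈ G' be edges such that G ∖ {e} = G' ∖ {e'} = H. Let I^{(1)} ⊔ J̄^{(1)} and I^{(2)} ⊔ J̄^{(2)} be the vertex sets of the two connected components of the forest H (with I^{(k)} ⊆ [n] and J̄^{(k)} ⊆ [d̄]). Then G and G' are compatible if and only if either e joins a vertex of I^{(1)} to a vertex of J̄^{(2)} and e' joins a vertex of I^{(2)} to a vertex of J̄^{(1)}, or e joins a vertex of I^{(2)} to a vertex of J̄^{(1)} and e' joins a vertex of I^{(1)} to a vertex of J̄^{(2)}. In particular, if G and G' are compatible then e and e' share no vertex. -/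
open Finset

/-- A bipartite graph between `α` and `β`, identified with its edge set. -/
abbrev BGraph (α β : Type*) := Finset (α × β)

section BipartiteDefs

variable {α β : Type*} [DecidableEq α] [DecidableEq β]

/-- Left degree vector. -/
def LD (G : BGraph α β) (a : α) : ℕ := (G.filter fun e => e.1 = a).card

/-- Right degree vector. -/
def RD (G : BGraph α β) (b : β) : ℕ := (G.filter fun e => e.2 = b).card

/-- The simple graph on `α ⊕ β` associated to a bipartite edge set. -/
def toGraph (G : BGraph α β) : SimpleGraph (α ⊕ β) :=
  SimpleGraph.fromRel fun x y => ∃ a b, x = Sum.inl a ∧ y = Sum.inr b ∧ (a, b) ∈ G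

/-- Acyclicity of a bipartite edge set. -/
def Acyclic (G : BGraph α β) : Prop := (toGraph G).IsAcyclic

/-- `U` is a tree on the vertex set `I ⊔ J`. -/
def IsTreeOn (U : BGraph α β) (I : Finset α) (J : Finset β) : Prop :=
  (∀ e ∈ U, e.1 ∈ I ∧ e.2 ∈ J) ∧ Acyclic U ∧
    ∀ x y : α ⊕ β, Sum.elim (· ∈ I) (· ∈ J) x → Sum.elim (· ∈ I) (· ∈ J) y →
      (toGraph U).Reachable x y

/-- `M` is a perfect matching between `I` and `J`. -/
def IsMatching (M : BGraph α β) (I : Finset α) (J : Finset β) : Prop :=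
  (∀ e ∈ M, e.1 ∈ I ∧ e.2 ∈ J) ∧ (∀ a ∈ I, ∃! b : β, (a, b) ∈ M) ∧
    ∀ b ∈ J, ∃! a : α, (a, b) ∈ M

/-- Compatibility of two bipartite graphs. -/
def Compatible (G G' : BGraph α β) : Prop :=
  ∀ (I : Finset α) (J : Finset β) (M M' : BGraph α β),
    M ⊆ G → M' ⊆ G' → IsMatching M I J → IsMatching M' I J → M = M'

end BipartiteDefs



section Lemmas
set_option linter.unusedSectionVars false
variable {α β : Type*} [DecidableEq α] [DecidableEq β]

lemma adj_inl_inr {U : BGraph α β} {a : α} {b : β} :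
    (toGraph U).Adj (Sum.inl a) (Sum.inr b) ↔ (a, b) ∈ U := by
  simp [toGraph, SimpleGraph.fromRel_adj]

lemma adj_cases {U : BGraph α β} {x y : α ⊕ β} (h : (toGraph U).Adj x y) :
    ∃ a b, (a, b) ∈ U ∧ ((x = Sum.inl a ∧ y = Sum.inr b) ∨ (x = Sum.inr b ∧ y = Sum.inl a)) := by
  rw [toGraph, SimpleGraph.fromRel_adj] at h
  obtain ⟨-, (⟨a, b, rfl, rfl, hm⟩ | ⟨a, b, rfl, rfl, hm⟩)⟩ := h
  · exact ⟨a, b, hm, Or.inl ⟨rfl, rfl⟩⟩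
  · exact ⟨a, b, hm, Or.inr ⟨rfl, rfl⟩⟩

lemma toGraph_mono {U V : BGraph α β} (h : U ⊆ V) : toGraph U ≤ toGraph V := by
  intro x y hxy
  obtain ⟨a, b, hm, (⟨rfl, rfl⟩ | ⟨rfl, rfl⟩)⟩ := adj_cases hxy
  · exact adj_inl_inr.2 (h hm)
  · exact (adj_inl_inr.2 (h hm)).symm

lemma toGraph_le_del {U V : BGraph α β} {f : α × β} (h : U ⊆ V) (hf : f ∉ U) :
    toGraph U ≤ toGraph V \ SimpleGraph.fromEdgeSet {s(Sum.inl f.1, Sum.inr f.2)} := by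
  intro x y hxy
  refine ⟨toGraph_mono h hxy, ?_⟩
  obtain ⟨a, b, hm, (⟨rfl, rfl⟩ | ⟨rfl, rfl⟩)⟩ := adj_cases hxy <;>
  · simp only [SimpleGraph.fromEdgeSet_adj, Set.mem_singleton_iff, Sym2.eq, Sym2.rel_iff',
      Prod.mk.injEq, Prod.swap_prod_mk]
    rintro ⟨(⟨h1, h2⟩ | ⟨h1, h2⟩), -⟩ <;>
      first
      | (exact hf (by rw [show f = (a, b) from
          Prod.ext (Sum.inl.inj h1).symm (Sum.inr.inj h2).symm] at hm ⊢; exact hm))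
      | simp_all

lemma bridge {V : BGraph α β} {f : α × β} (hac : Acyclic V) (hf : f ∈ V) :
    ¬ (toGraph (V.erase f)).Reachable (Sum.inl f.1) (Sum.inr f.2) := by
  have hb := (SimpleGraph.isAcyclic_iff_forall_adj_isBridge.1 hac)
    (adj_inl_inr.2 (show (f.1, f.2) ∈ V from hf))
  rw [SimpleGraph.isBridge_iff] at hb
  intro hr
  exact hb (hr.mono (toGraph_le_del (erase_subset _ _) (notMem_erase _ _)))

lemma acyclic_subset {U V : BGraph α β} (h : U ⊆ V) (hac : Acyclic V) : Acyclic U := by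
  intro x p hp
  exact hac (p.mapLe (toGraph_mono h)) (hp.mapLe _)

lemma reach_side {U : BGraph α β} {p : α → Prop} {q : β → Prop}
    (hU : ∀ g ∈ U, (p g.1 ↔ q g.2)) {x y : α ⊕ β}
    (h : (toGraph U).Reachable x y) : Sum.elim p q x ↔ Sum.elim p q y := by
  obtain ⟨w⟩ := h
  induction w with
  | nil => rfl
  | cons h w ih =>
    refine Iff.trans ?_ ih
    obtain ⟨a, b, hm, (⟨rfl, rfl⟩ | ⟨rfl, rfl⟩)⟩ := adj_cases h
    · exact hU _ hm
    · exact (hU _ hm).symm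

end Lemmas

section Counting
set_option linter.unusedSectionVars false
variable {α β : Type*} [DecidableEq α] [DecidableEq β]

open Classical in
lemma count1 {M : BGraph α β} {I : Finset α} {J : Finset β} (hM : IsMatching M I J)
    (p : α → Prop) : (M.filter fun g => p g.1).card = (I.filter p).card := by
  classical
  apply Finset.card_bij (fun g _ => g.1)
  · intro g hg
    simp only [Finset.mem_filter] at hg ⊢
    exact ⟨(hM.1 g hg.1).1, hg.2⟩
  · intro g hg g' hg' hfst
    simp only [Finset.mem_filter] at hg hg'
    have h1 := hM.2.1 g.1 (hM.1 g hg.1).1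
    have := h1.unique (show (g.1, g.2) ∈ M from hg.1)
      (show (g.1, g'.2) ∈ M by rw [hfst]; exact hg'.1)
    exact Prod.ext hfst (by simpa using this)
  · intro a ha
    simp only [Finset.mem_filter] at ha
    obtain ⟨b, hb, -⟩ := hM.2.1 a ha.1
    exact ⟨(a, b), Finset.mem_filter.2 ⟨hb, ha.2⟩, rfl⟩

open Classical in
lemma count2 {M : BGraph α β} {I : Finset α} {J : Finset β} (hM : IsMatching M I J)
    (q : β → Prop) : (M.filter fun g => q g.2).card = (J.filter q).card := by
  classical
  apply Finset.card_bij (fun g _ => g.2)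
  · intro g hg
    simp only [Finset.mem_filter] at hg ⊢
    exact ⟨(hM.1 g hg.1).2, hg.2⟩
  · intro g hg g' hg' hsnd
    simp only [Finset.mem_filter] at hg hg'
    have h1 := hM.2.2 g.2 (hM.1 g hg.1).2
    have := h1.unique (show (g.1, g.2) ∈ M from hg.1)
      (show (g'.1, g.2) ∈ M by rw [hsnd]; exact hg'.1)
    exact Prod.ext (by simpa using this) hsnd
  · intro b hb
    simp only [Finset.mem_filter] at hb
    obtain ⟨a, ha, -⟩ := hM.2.2 b hb.1
    exact ⟨(a, b), Finset.mem_filter.2 ⟨ha, hb.2⟩, rfl⟩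

open Classical in
/-- If all edges of `M` respect the cut `(p, q)`, the two sides have equal size. -/
lemma cut_eq {M : BGraph α β} {I : Finset α} {J : Finset β} (hM : IsMatching M I J)
    {p : α → Prop} {q : β → Prop} (hresp : ∀ g ∈ M, (p g.1 ↔ q g.2)) :
    (I.filter p).card = (J.filter q).card := by
  classical
  rw [← count1 hM p, ← count2 hM q]
  congr 1
  apply Finset.filter_congr
  intro g hg
  simpa using hresp g hg

open Classical in
/-- If all edges of `M` except `f ∈ M` respect the cut, and `f` crosses it from left. -/
lemma cut_succ {M : BGraph α β} {I : Finset α} {J : Finset β} (hM : IsMatching M I J)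
    {p : α → Prop} {q : β → Prop} {f : α × β} (hf : f ∈ M)
    (hresp : ∀ g ∈ M, g ≠ f → (p g.1 ↔ q g.2)) (h1 : p f.1) (h2 : ¬ q f.2) :
    (I.filter p).card = (J.filter q).card + 1 := by
  classical
  rw [← count1 hM p, ← count2 hM q]
  have : (M.filter fun g => p g.1) = insert f (M.filter fun g => q g.2) := by
    ext g
    simp only [Finset.mem_filter, Finset.mem_insert]
    constructor
    · rintro ⟨hg, hpg⟩
      rcases eq_or_ne g f with rfl | hne
      · exact Or.inl rfl
      · exact Or.inr ⟨hg, (hresp g hg hne).1 hpg⟩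
    · rintro (rfl | ⟨hg, hqg⟩)
      · exact ⟨hf, h1⟩
      · have hne : g ≠ f := by rintro rfl; exact h2 hqg
        exact ⟨hg, (hresp g hg hne).2 hqg⟩
  rw [this, Finset.card_insert_of_notMem (by simp [h2])]

/-- Disjoint union of matchings. -/
lemma matching_union {M₁ M₂ : BGraph α β} {I₁ I₂ : Finset α} {J₁ J₂ : Finset β}
    (h₁ : IsMatching M₁ I₁ J₁) (h₂ : IsMatching M₂ I₂ J₂)
    (hI : Disjoint I₁ I₂) (hJ : Disjoint J₁ J₂) :
    IsMatching (M₁ ∪ M₂) (I₁ ∪ I₂) (J₁ ∪ J₂) := by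
  refine ⟨?_, ?_, ?_⟩
  · intro g hg
    rcases Finset.mem_union.1 hg with hg | hg
    · exact ⟨Finset.mem_union_left _ (h₁.1 g hg).1, Finset.mem_union_left _ (h₁.1 g hg).2⟩
    · exact ⟨Finset.mem_union_right _ (h₂.1 g hg).1, Finset.mem_union_right _ (h₂.1 g hg).2⟩
  · intro a ha
    rcases Finset.mem_union.1 ha with ha | ha
    · obtain ⟨b, hb, hu⟩ := h₁.2.1 a ha
      refine ⟨b, Finset.mem_union_left _ hb, ?_⟩
      intro b' hb'
      rcases Finset.mem_union.1 hb' with hb' | hb'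
      · exact hu b' hb'
      · exact absurd ((h₂.1 _ hb').1) (Finset.disjoint_left.1 hI ha)
    · obtain ⟨b, hb, hu⟩ := h₂.2.1 a ha
      refine ⟨b, Finset.mem_union_right _ hb, ?_⟩
      intro b' hb'
      rcases Finset.mem_union.1 hb' with hb' | hb'
      · exact absurd ((h₁.1 _ hb').1) (Finset.disjoint_right.1 hI ha)
      · exact hu b' hb'
  · intro b hb
    rcases Finset.mem_union.1 hb with hb | hb
    · obtain ⟨a, ha, hu⟩ := h₁.2.2 b hb
      refine ⟨a, Finset.mem_union_left _ ha, ?_⟩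
      intro a' ha'
      rcases Finset.mem_union.1 ha' with ha' | ha'
      · exact hu a' ha'
      · exact absurd ((h₂.1 _ ha').2) (Finset.disjoint_left.1 hJ hb)
    · obtain ⟨a, ha, hu⟩ := h₂.2.2 b hb
      refine ⟨a, Finset.mem_union_right _ ha, ?_⟩
      intro a' ha'
      rcases Finset.mem_union.1 ha' with ha' | ha'
      · exact absurd ((h₁.1 _ ha').2) (Finset.disjoint_right.1 hJ hb)
      · exact hu a' ha'

lemma matching_single (a : α) (b : β) : IsMatching {(a, b)} {a} {b} := by
  refine ⟨?_, ?_, ?_⟩ <;> simp [Prod.ext_iff]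

lemma matching_empty : IsMatching (∅ : BGraph α β) ∅ ∅ := by
  refine ⟨?_, ?_, ?_⟩ <;> simp

end Counting

section Counting2
set_option linter.unusedSectionVars false
variable {α β : Type*} [DecidableEq α] [DecidableEq β]

open Classical in
/-- Mirror of `cut_succ`: `f` crosses the cut from the right. -/
lemma cut_succ' {M : BGraph α β} {I : Finset α} {J : Finset β} (hM : IsMatching M I J)
    {p : α → Prop} {q : β → Prop} {f : α × β} (hf : f ∈ M)
    (hresp : ∀ g ∈ M, g ≠ f → (p g.1 ↔ q g.2)) (h1 : ¬ p f.1) (h2 : q f.2) :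
    (J.filter q).card = (I.filter p).card + 1 := by
  classical
  rw [← count1 hM p, ← count2 hM q]
  have : (M.filter fun g => q g.2) = insert f (M.filter fun g => p g.1) := by
    ext g
    simp only [Finset.mem_filter, Finset.mem_insert]
    constructor
    · rintro ⟨hg, hqg⟩
      rcases eq_or_ne g f with rfl | hne
      · exact Or.inl rfl
      · exact Or.inr ⟨hg, (hresp g hg hne).2 hqg⟩
    · rintro (rfl | ⟨hg, hpg⟩)
      · exact ⟨hf, h2⟩
      · have hne : g ≠ f := by rintro rfl; exact h1 hpg
        exact ⟨hg, (hresp g hg hne).1 hpg⟩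
  rw [this, Finset.card_insert_of_notMem (by simp [h1])]

end Counting2

section Uniq
set_option linter.unusedSectionVars false
variable {α β : Type*} [DecidableEq α] [DecidableEq β]

lemma unique_matching_subset {U M M' : BGraph α β} {I : Finset α} {J : Finset β}
    (hac : Acyclic U) (hMU : M ⊆ U) (hM'U : M' ⊆ U)
    (hM : IsMatching M I J) (hM' : IsMatching M' I J) : M ⊆ M' := by
  intro f hf
  by_contra hf'
  -- the cut given by the two sides of the bridge f in the forest U
  set p : α → Prop := fun a => (toGraph (U.erase f)).Reachable (Sum.inl f.1) (Sum.inl a) with hp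
  set q : β → Prop := fun b => (toGraph (U.erase f)).Reachable (Sum.inl f.1) (Sum.inr b) with hq
  have hstep : ∀ g ∈ U.erase f, (p g.1 ↔ q g.2) := by
    intro g hg
    have hadj : (toGraph (U.erase f)).Adj (Sum.inl g.1) (Sum.inr g.2) :=
      adj_inl_inr.2 (show (g.1, g.2) ∈ U.erase f from hg)
    exact ⟨fun h => h.trans hadj.reachable, fun h => h.trans hadj.symm.reachable⟩
  have hresp : ∀ g ∈ M, g ≠ f → (p g.1 ↔ q g.2) :=
    fun g hg hne => hstep g (Finset.mem_erase.2 ⟨hne, hMU hg⟩)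
  have hresp' : ∀ g ∈ M', (p g.1 ↔ q g.2) := by
    intro g hg
    exact hstep g (Finset.mem_erase.2 ⟨fun h => hf' (h ▸ hg), hM'U hg⟩)
  have h1 : p f.1 := SimpleGraph.Reachable.refl _
  have h2 : ¬ q f.2 := bridge hac (hMU hf)
  have := cut_succ hM hf hresp h1 h2
  have := cut_eq hM' hresp'
  omega

lemma unique_matching {U M M' : BGraph α β} {I : Finset α} {J : Finset β}
    (hac : Acyclic U) (hMU : M ⊆ U) (hM'U : M' ⊆ U)
    (hM : IsMatching M I J) (hM' : IsMatching M' I J) : M = M' :=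
  Finset.Subset.antisymm (unique_matching_subset hac hMU hM'U hM hM')
    (unique_matching_subset hac hM'U hMU hM' hM)

end Uniq

section PathMatch
set_option linter.unusedSectionVars false
variable {α β : Type*} [DecidableEq α] [DecidableEq β]

open SimpleGraph

/-- From a path between two left vertices `x, y`, extract a matching of the left
support minus `y` onto the right support. -/
lemma path_matching {U : BGraph α β} :
    ∀ (N : ℕ) {x y : α} (p : (toGraph U).Walk (Sum.inl x) (Sum.inl y)),
      p.length ≤ N → p.IsPath →
      ∃ (I : Finset α) (J : Finset β) (M : BGraph α β), M ⊆ U ∧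
        (∀ v : α, v ∈ I ↔ Sum.inl v ∈ p.support) ∧
        (∀ w : β, w ∈ J ↔ Sum.inr w ∈ p.support) ∧
        IsMatching M (I.erase y) J := by
  intro N
  induction N with
  | zero =>
    intro x y p hlen _
    have : p.length = 0 := Nat.le_zero.1 hlen
    have hxy : Sum.inl x = Sum.inl y := (SimpleGraph.Walk.eq_of_length_eq_zero this)
    obtain rfl : x = y := Sum.inl.inj hxy
    refine ⟨{x}, ∅, ∅, Finset.empty_subset _, ?_, ?_, ?_⟩
    · intro v
      cases p with
      | nil => simp
      | cons h q => simp at this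
    · intro w
      cases p with
      | nil => simp
      | cons h q => simp at this
    · simpa using matching_empty
  | succ N ih =>
    intro x y p hlen hp
    cases p with
    | nil =>
      refine ⟨{x}, ∅, ∅, Finset.empty_subset _, by simp, by simp, by simpa using matching_empty⟩
    | cons h q =>
      rename_i w1
      obtain ⟨a, b, hm, (⟨hxa, hw1⟩ | ⟨hxb, hw1⟩)⟩ := adj_cases h
      swap
      · exact absurd hxb (by simp)
      obtain rfl : a = x := (Sum.inl.inj hxa).symm
      subst hw1
      cases q with
      | cons h2 q2 =>
        rename_i w2
        obtain ⟨a2, b2, hm2, (⟨hxa2, hw2⟩ | ⟨hxb2, hw2⟩)⟩ := adj_cases h2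
        · exact absurd hxa2 (by simp)
        obtain rfl : b2 = b := (Sum.inr.inj hxb2).symm
        subst hw2
        have hq2path : q2.IsPath := hp.of_cons.of_cons
        have hq2len : q2.length ≤ N := by
          have : q2.length + 2 ≤ N + 1 := by
            simpa [SimpleGraph.Walk.length_cons] using hlen
          omega
        obtain ⟨I₁, J₁, M₁, hM₁U, hIc, hJc, hmatch⟩ := ih q2 (by omega) hq2path
        have hsupp := hp.support_nodup
        simp only [SimpleGraph.Walk.support_cons, List.nodup_cons] at hsupp
        have hxnot : Sum.inl a ∉ q2.support := by
          intro hmem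
          exact hsupp.1 (by simp [hmem])
        have hbnot : Sum.inr b2 ∉ q2.support := hsupp.2.1
        have hxI : a ∉ I₁ := fun hx => hxnot ((hIc a).1 hx)
        have hbJ : b2 ∉ J₁ := fun hb => hbnot ((hJc b2).1 hb)
        have hxy : a ≠ y := by
          intro hxy
          subst hxy
          exact hxnot q2.end_mem_support
        refine ⟨insert a I₁, insert b2 J₁, insert (a, b2) M₁, ?_, ?_, ?_, ?_⟩
        · intro g hg
          rcases Finset.mem_insert.1 hg with rfl | hg
          · exact hm
          · exact hM₁U hg
        · intro v
          simp only [Finset.mem_insert, SimpleGraph.Walk.support_cons, List.mem_cons, hIc]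
          constructor
          · rintro (rfl | hv)
            · exact Or.inl rfl
            · exact Or.inr (Or.inr hv)
          · rintro (hv | hv | hv)
            · exact Or.inl (Sum.inl.inj hv)
            · exact absurd hv (by rintro ⟨⟩)
            · exact Or.inr hv
        · intro v
          simp only [Finset.mem_insert, SimpleGraph.Walk.support_cons, List.mem_cons, hJc]
          constructor
          · rintro (rfl | hv)
            · exact Or.inr (Or.inl rfl)
            · exact Or.inr (Or.inr hv)
          · rintro (hv | hv | hv)
            · exact absurd hv (by rintro ⟨⟩)
            · exact Or.inl (Sum.inr.inj hv)
            · exact Or.inr hv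
        · rw [show (insert a I₁).erase y = {a} ∪ (I₁.erase y) by
            rw [Finset.erase_insert_of_ne hxy]; rw [Finset.insert_eq],
            show insert b2 J₁ = {b2} ∪ J₁ by rw [Finset.insert_eq],
            show insert (a, b2) M₁ = {(a, b2)} ∪ M₁ by rw [Finset.insert_eq]]
          apply matching_union (matching_single a b2) hmatch
          · simp only [Finset.disjoint_singleton_left]
            exact fun hx => hxI (Finset.mem_of_mem_erase hx)
          · simpa using hbJ

end PathMatch

section PathMatchR
set_option linter.unusedSectionVars false
variable {α β : Type*} [DecidableEq α] [DecidableEq β]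

open SimpleGraph

/-- Right-side version: from a path between right vertices `s, t`, a matching of the
left support onto the right support minus `t`. -/
lemma pathR_matching {U : BGraph α β} :
    ∀ (N : ℕ) {s t : β} (p : (toGraph U).Walk (Sum.inr s) (Sum.inr t)),
      p.length ≤ N → p.IsPath →
      ∃ (I : Finset α) (J : Finset β) (M : BGraph α β), M ⊆ U ∧
        (∀ v : α, v ∈ I ↔ Sum.inl v ∈ p.support) ∧
        (∀ w : β, w ∈ J ↔ Sum.inr w ∈ p.support) ∧
        IsMatching M I (J.erase t) := by
  intro N
  induction N with
  | zero =>
    intro s t p hlen _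
    have hl0 : p.length = 0 := Nat.le_zero.1 hlen
    obtain rfl : s = t := Sum.inr.inj (SimpleGraph.Walk.eq_of_length_eq_zero hl0)
    refine ⟨∅, {s}, ∅, Finset.empty_subset _, ?_, ?_, ?_⟩
    · intro v
      cases p with
      | nil => simp
      | cons h q => simp at hl0
    · intro w
      cases p with
      | nil => simp
      | cons h q => simp at hl0
    · simpa using matching_empty
  | succ N ih =>
    intro s t p hlen hp
    cases p with
    | nil =>
      refine ⟨∅, {s}, ∅, Finset.empty_subset _, by simp, by simp, by simpa using matching_empty⟩
    | cons h q =>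
      rename_i w1
      obtain ⟨a, b, hm, (⟨hxa, hw1⟩ | ⟨hxb, hw1⟩)⟩ := adj_cases h
      · exact absurd hxa (by simp)
      obtain rfl : b = s := (Sum.inr.inj hxb).symm
      subst hw1
      cases q with
      | cons h2 q2 =>
        rename_i w2
        obtain ⟨a2, b2, hm2, (⟨hxa2, hw2⟩ | ⟨hxb2, hw2⟩)⟩ := adj_cases h2
        swap
        · exact absurd hxb2 (by simp)
        obtain rfl : a2 = a := (Sum.inl.inj hxa2).symm
        subst hw2
        have hq2path : q2.IsPath := hp.of_cons.of_cons
        have hq2len : q2.length ≤ N := by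
          have : q2.length + 2 ≤ N + 1 := by
            simpa [SimpleGraph.Walk.length_cons] using hlen
          omega
        obtain ⟨I₁, J₁, M₁, hM₁U, hIc, hJc, hmatch⟩ := ih q2 (by omega) hq2path
        have hsupp := hp.support_nodup
        simp only [SimpleGraph.Walk.support_cons, List.nodup_cons] at hsupp
        have hsnot : Sum.inr b ∉ q2.support := by
          intro hmem
          exact hsupp.1 (by simp [hmem])
        have hanot : Sum.inl a2 ∉ q2.support := hsupp.2.1
        have hsJ : b ∉ J₁ := fun hx => hsnot ((hJc b).1 hx)
        have haI : a2 ∉ I₁ := fun hb => hanot ((hIc a2).1 hb)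
        have hst : b ≠ t := by
          intro hst
          subst hst
          exact hsnot q2.end_mem_support
        refine ⟨insert a2 I₁, insert b J₁, insert (a2, b) M₁, ?_, ?_, ?_, ?_⟩
        · intro g hg
          rcases Finset.mem_insert.1 hg with rfl | hg
          · exact hm
          · exact hM₁U hg
        · intro v
          simp only [Finset.mem_insert, SimpleGraph.Walk.support_cons, List.mem_cons, hIc]
          constructor
          · rintro (rfl | hv)
            · exact Or.inr (Or.inl rfl)
            · exact Or.inr (Or.inr hv)
          · rintro (hv | hv | hv)
            · exact absurd hv (by rintro ⟨⟩)
            · exact Or.inl (Sum.inl.inj hv)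
            · exact Or.inr hv
        · intro w
          simp only [Finset.mem_insert, SimpleGraph.Walk.support_cons, List.mem_cons, hJc]
          constructor
          · rintro (rfl | hv)
            · exact Or.inl rfl
            · exact Or.inr (Or.inr hv)
          · rintro (hv | hv | hv)
            · exact Or.inl (Sum.inr.inj hv)
            · exact absurd hv (by rintro ⟨⟩)
            · exact Or.inr hv
        · rw [show (insert b J₁).erase t = {b} ∪ (J₁.erase t) by
            rw [Finset.erase_insert_of_ne hst]; rw [Finset.insert_eq],
            show insert a2 I₁ = {a2} ∪ I₁ by rw [Finset.insert_eq],
            show insert (a2, b) M₁ = {(a2, b)} ∪ M₁ by rw [Finset.insert_eq]]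
          apply matching_union (matching_single a2 b) hmatch
          · simpa using haI
          · simp only [Finset.disjoint_singleton_left]
            exact fun hx => hsJ (Finset.mem_of_mem_erase hx)

end PathMatchR

section PathCor
set_option linter.unusedSectionVars false
variable {α β : Type*} [DecidableEq α] [DecidableEq β]

open SimpleGraph

/-- From reachability between distinct-or-equal left vertices, get the vertex sets and
both alternating matchings. -/
lemma path_two_matchings {U : BGraph α β} {x y : α}
    (h : (toGraph U).Reachable (Sum.inl x) (Sum.inl y)) :
    ∃ (I : Finset α) (J : Finset β) (M M' : BGraph α β), M ⊆ U ∧ M' ⊆ U ∧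
      x ∈ I ∧ y ∈ I ∧
      (∀ v ∈ I, (toGraph U).Reachable (Sum.inl x) (Sum.inl v)) ∧
      (∀ w ∈ J, (toGraph U).Reachable (Sum.inl x) (Sum.inr w)) ∧
      IsMatching M (I.erase y) J ∧ IsMatching M' (I.erase x) J := by
  obtain ⟨w⟩ := h
  set p := w.toPath.1 with hpdef
  have hp : p.IsPath := w.toPath.2
  obtain ⟨I, J, M, hMU, hIc, hJc, hmatch⟩ := path_matching p.length p le_rfl hp
  obtain ⟨I', J', M', hM'U, hIc', hJc', hmatch'⟩ :=
    path_matching p.reverse.length p.reverse le_rfl hp.reverse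
  have hII : I' = I := by
    ext v; rw [hIc, hIc', SimpleGraph.Walk.support_reverse, List.mem_reverse]
  have hJJ : J' = J := by
    ext v; rw [hJc, hJc', SimpleGraph.Walk.support_reverse, List.mem_reverse]
  rw [hII] at hmatch'; rw [hJJ] at hmatch'
  refine ⟨I, J, M, M', hMU, hM'U, ?_, ?_, ?_, ?_, hmatch, hmatch'⟩
  · exact (hIc x).2 p.start_mem_support
  · exact (hIc y).2 p.end_mem_support
  · intro v hv
    exact ⟨p.takeUntil _ ((hIc v).1 hv)⟩
  · intro w hw
    exact ⟨p.takeUntil _ ((hJc w).1 hw)⟩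

lemma pathR_two_matchings {U : BGraph α β} {s t : β}
    (h : (toGraph U).Reachable (Sum.inr s) (Sum.inr t)) :
    ∃ (I : Finset α) (J : Finset β) (M M' : BGraph α β), M ⊆ U ∧ M' ⊆ U ∧
      s ∈ J ∧ t ∈ J ∧
      (∀ v ∈ I, (toGraph U).Reachable (Sum.inr s) (Sum.inl v)) ∧
      (∀ w ∈ J, (toGraph U).Reachable (Sum.inr s) (Sum.inr w)) ∧
      IsMatching M I (J.erase t) ∧ IsMatching M' I (J.erase s) := by
  obtain ⟨w⟩ := h
  set p := w.toPath.1 with hpdef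
  have hp : p.IsPath := w.toPath.2
  obtain ⟨I, J, M, hMU, hIc, hJc, hmatch⟩ := pathR_matching p.length p le_rfl hp
  obtain ⟨I', J', M', hM'U, hIc', hJc', hmatch'⟩ :=
    pathR_matching p.reverse.length p.reverse le_rfl hp.reverse
  have hII : I' = I := by
    ext v; rw [hIc, hIc', SimpleGraph.Walk.support_reverse, List.mem_reverse]
  have hJJ : J' = J := by
    ext v; rw [hJc, hJc', SimpleGraph.Walk.support_reverse, List.mem_reverse]
  rw [hII] at hmatch'; rw [hJJ] at hmatch'
  refine ⟨I, J, M, M', hMU, hM'U, ?_, ?_, ?_, ?_, hmatch, hmatch'⟩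
  · exact (hJc s).2 p.start_mem_support
  · exact (hJc t).2 p.end_mem_support
  · intro v hv
    exact ⟨p.takeUntil _ ((hIc v).1 hv)⟩
  · intro w hw
    exact ⟨p.takeUntil _ ((hJc w).1 hw)⟩

end PathCor

section MainHelpers
set_option linter.unusedSectionVars false
variable {α β : Type*} [DecidableEq α] [DecidableEq β]

lemma compat_symm {G G' : BGraph α β} (h : Compatible G G') : Compatible G' G := by
  intro I J M M' hM hM' h1 h2
  exact (h I J M' M hM' hM h2 h1).symm

/-- If `e` crosses from `(I1,J1)`-side to `(I2,J2)`-side and `e'` crosses the other way,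
then `G = H ∪ {e}` and `G' = H ∪ {e'}` are compatible. -/
lemma compat_core {G G' : BGraph α β} {e e' : α × β}
    (hGac : Acyclic G) (he : e ∈ G) (he' : e' ∈ G') (hH : G.erase e = G'.erase e')
    {I1 I2 : Finset α} {J1 J2 : Finset β}
    (hId : Disjoint I1 I2) (hJd : Disjoint J1 J2)
    (hresp : ∀ g ∈ G.erase e, (g.1 ∈ I1 ↔ g.2 ∈ J1))
    (hA1 : e.1 ∈ I1) (hA2 : e.2 ∈ J2) (hB1 : e'.1 ∈ I2) (hB2 : e'.2 ∈ J1) :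
    Compatible G G' := by
  intro I J M M' hMG hM'G' hM hM'
  have hrespM : ∀ g ∈ M, g ≠ e → ((g.1 ∈ I1) ↔ (g.2 ∈ J1)) := fun g hg hne =>
    hresp g (Finset.mem_erase.2 ⟨hne, hMG hg⟩)
  have hrespM' : ∀ g ∈ M', g ≠ e' → ((g.1 ∈ I1) ↔ (g.2 ∈ J1)) := by
    intro g hg hne
    refine hresp g ?_
    rw [hH]
    exact Finset.mem_erase.2 ⟨hne, hM'G' hg⟩
  have he2 : e.2 ∉ J1 := Finset.disjoint_right.1 hJd hA2
  have he'1 : e'.1 ∉ I1 := Finset.disjoint_right.1 hId hB1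
  -- e ∉ M
  have heM : e ∉ M := by
    intro heM
    have h1 := cut_succ hM heM hrespM hA1 he2
    by_cases he'M' : e' ∈ M'
    · have h2 := cut_succ' hM' he'M' hrespM' he'1 hB2
      omega
    · have h2 := cut_eq hM' (fun g hg => hrespM' g hg (fun h => he'M' (h ▸ hg)))
      omega
  have h1 := cut_eq hM (fun g hg => hrespM g hg (fun h => heM (h ▸ hg)))
  have he'M' : e' ∉ M' := by
    intro he'M'
    have h2 := cut_succ' hM' he'M' hrespM' he'1 hB2
    omega
  -- both matchings live in the common forest H
  have hMH : M ⊆ G.erase e := fun g hg =>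
    Finset.mem_erase.2 ⟨fun h => heM (h ▸ hg), hMG hg⟩
  have hM'H : M' ⊆ G.erase e := by
    intro g hg
    rw [hH]
    exact Finset.mem_erase.2 ⟨fun h => he'M' (h ▸ hg), hM'G' hg⟩
  exact unique_matching (acyclic_subset (Finset.erase_subset _ _) hGac) hMH hM'H hM hM'

/-- If both `e` and `e'` cross the cut in the same direction, `G` and `G'` are
incompatible. -/
lemma incompat {G G' : BGraph α β} {e e' : α × β}
    (he : e ∈ G) (he' : e' ∈ G') (hH : G.erase e = G'.erase e') (hee' : e ≠ e')
    {I1 I2 : Finset α} {J1 J2 : Finset β}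
    (hId : Disjoint I1 I2) (hJd : Disjoint J1 J2)
    (hconn1 : ∀ x y : α ⊕ β, Sum.elim (· ∈ I1) (· ∈ J1) x →
      Sum.elim (· ∈ I1) (· ∈ J1) y → (toGraph (G.erase e)).Reachable x y)
    (hconn2 : ∀ x y : α ⊕ β, Sum.elim (· ∈ I2) (· ∈ J2) x →
      Sum.elim (· ∈ I2) (· ∈ J2) y → (toGraph (G.erase e)).Reachable x y)
    (hresp1 : ∀ g ∈ G.erase e, (g.1 ∈ I1 ↔ g.2 ∈ J1))
    (hresp2 : ∀ g ∈ G.erase e, (g.1 ∈ I2 ↔ g.2 ∈ J2))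
    (hA1 : e.1 ∈ I1) (hA2 : e.2 ∈ J2) (hA1' : e'.1 ∈ I1) (hA2' : e'.2 ∈ J2) :
    ¬ Compatible G G' := by
  intro hcomp
  set H := G.erase e with hHdef
  have reach1 : (toGraph H).Reachable (Sum.inl e'.1) (Sum.inl e.1) :=
    hconn1 _ _ (by simpa) (by simpa)
  have reach2 : (toGraph H).Reachable (Sum.inr e.2) (Sum.inr e'.2) :=
    hconn2 _ _ (by simpa) (by simpa)
  obtain ⟨Ia, Ja, Ma, Ma', hMaH, hMa'H, he'1Ia, he1Ia, hreachIa, hreachJa, hmMa, hmMa'⟩ :=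
    path_two_matchings reach1
  obtain ⟨Ib, Jb, Mb, Mb', hMbH, hMb'H, he2Jb, he'2Jb, hreachIb, hreachJb, hmMb, hmMb'⟩ :=
    pathR_two_matchings reach2
  -- localize the supports
  have hIa1 : ∀ v ∈ Ia, v ∈ I1 := by
    intro v hv
    have := reach_side hresp1 (hreachIa v hv)
    simpa using this.1 (by simpa using hA1')
  have hJa1 : ∀ w ∈ Ja, w ∈ J1 := by
    intro w hw
    have := reach_side hresp1 (hreachJa w hw)
    simpa using this.1 (by simpa using hA1')
  have hIb2 : ∀ v ∈ Ib, v ∈ I2 := by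
    intro v hv
    have := reach_side hresp2 (hreachIb v hv)
    simpa using this.1 (by simpa using hA2)
  have hJb2 : ∀ w ∈ Jb, w ∈ J2 := by
    intro w hw
    have := reach_side hresp2 (hreachJb w hw)
    simpa using this.1 (by simpa using hA2)
  have hIab : Disjoint Ia Ib :=
    hId.mono (fun v hv => hIa1 v hv) (fun v hv => hIb2 v hv)
  have hJab : Disjoint Ja Jb :=
    hJd.mono (fun v hv => hJa1 v hv) (fun v hv => hJb2 v hv)
  -- assemble the two matchings
  have hsingle : IsMatching {e} {e.1} {e.2} := by
    have := matching_single e.1 e.2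
    simpa using this
  have hsingle' : IsMatching {e'} {e'.1} {e'.2} := by
    have := matching_single e'.1 e'.2
    simpa using this
  have hm1 : IsMatching ({e} ∪ Ma) ({e.1} ∪ Ia.erase e.1) ({e.2} ∪ Ja) := by
    apply matching_union hsingle hmMa
    · simp
    · simp only [Finset.disjoint_singleton_left]
      intro h
      exact Finset.disjoint_left.1 hJd (hJa1 _ h) hA2
  have hm2 : IsMatching (({e} ∪ Ma) ∪ Mb') (({e.1} ∪ Ia.erase e.1) ∪ Ib)
      (({e.2} ∪ Ja) ∪ Jb.erase e.2) := by
    apply matching_union hm1 hmMb'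
    · refine Finset.disjoint_union_left.2 ⟨?_, hIab.mono (Finset.erase_subset _ _) le_rfl⟩
      simp only [Finset.disjoint_singleton_left]
      intro h
      exact Finset.disjoint_left.1 hId hA1 (hIb2 _ h)
    · refine Finset.disjoint_union_left.2 ⟨?_, hJab.mono le_rfl (Finset.erase_subset _ _)⟩
      simp
  have hsetI : ({e.1} ∪ Ia.erase e.1) ∪ Ib = Ia ∪ Ib := by
    rw [← Finset.insert_eq, Finset.insert_erase he1Ia]
  have hsetJ : ({e.2} ∪ Ja) ∪ Jb.erase e.2 = Ja ∪ Jb := by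
    rw [Finset.union_comm {e.2} Ja, Finset.union_assoc, ← Finset.insert_eq,
      Finset.insert_erase he2Jb]
  rw [hsetI, hsetJ] at hm2
  have hm1' : IsMatching ({e'} ∪ Ma') ({e'.1} ∪ Ia.erase e'.1) ({e'.2} ∪ Ja) := by
    apply matching_union hsingle' hmMa'
    · simp
    · simp only [Finset.disjoint_singleton_left]
      intro h
      exact Finset.disjoint_left.1 hJd (hJa1 _ h) hA2'
  have hm2' : IsMatching (({e'} ∪ Ma') ∪ Mb) (({e'.1} ∪ Ia.erase e'.1) ∪ Ib)
      (({e'.2} ∪ Ja) ∪ Jb.erase e'.2) := by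
    apply matching_union hm1' hmMb
    · refine Finset.disjoint_union_left.2 ⟨?_, hIab.mono (Finset.erase_subset _ _) le_rfl⟩
      simp only [Finset.disjoint_singleton_left]
      intro h
      exact Finset.disjoint_left.1 hId hA1' (hIb2 _ h)
    · refine Finset.disjoint_union_left.2 ⟨?_, hJab.mono le_rfl (Finset.erase_subset _ _)⟩
      simp
  have hsetI' : ({e'.1} ∪ Ia.erase e'.1) ∪ Ib = Ia ∪ Ib := by
    rw [← Finset.insert_eq, Finset.insert_erase he'1Ia]
  have hsetJ' : ({e'.2} ∪ Ja) ∪ Jb.erase e'.2 = Ja ∪ Jb := by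
    rw [Finset.union_comm {e'.2} Ja, Finset.union_assoc, ← Finset.insert_eq,
      Finset.insert_erase he'2Jb]
  rw [hsetI', hsetJ'] at hm2'
  -- the two matchings are contained in G and G' respectively
  have hHsubG : H ⊆ G := Finset.erase_subset _ _
  have hHsubG' : H ⊆ G' := by
    rw [hH]
    exact Finset.erase_subset _ _
  have hMsub : ({e} ∪ Ma) ∪ Mb' ⊆ G := by
    intro g hg
    rcases Finset.mem_union.1 hg with hg | hg
    · rcases Finset.mem_union.1 hg with hg | hg
      · rw [Finset.mem_singleton.1 hg]; exact he
      · exact hHsubG (hMaH hg)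
    · exact hHsubG (hMb'H hg)
  have hM'sub : ({e'} ∪ Ma') ∪ Mb ⊆ G' := by
    intro g hg
    rcases Finset.mem_union.1 hg with hg | hg
    · rcases Finset.mem_union.1 hg with hg | hg
      · rw [Finset.mem_singleton.1 hg]; exact he'
      · exact hHsubG' (hMa'H hg)
    · exact hHsubG' (hMbH hg)
  have := hcomp (Ia ∪ Ib) (Ja ∪ Jb) _ _ hMsub hM'sub hm2 hm2'
  have heM : e ∈ ({e} ∪ Ma) ∪ Mb' := by simp
  rw [this] at heM
  rcases Finset.mem_union.1 heM with hg | hg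
  · rcases Finset.mem_union.1 hg with hg | hg
    · exact hee' (Finset.mem_singleton.1 hg)
    · exact Finset.notMem_erase e G (hMa'H hg)
  · exact Finset.notMem_erase e G (hMbH hg)

end MainHelpers

section Cross
set_option linter.unusedSectionVars false
variable {α β : Type*} [DecidableEq α] [DecidableEq β]

/-- The removed edge of a spanning tree must cross the two components of the rest. -/
lemma cross_of {G : BGraph α β} {e : α × β}
    (hac : Acyclic G) (hconn : ∀ x y : α ⊕ β, (toGraph G).Reachable x y)
    (he : e ∈ G)
    {I1 I2 : Finset α} {J1 J2 : Finset β}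
    (hIu : ∀ a : α, a ∈ I1 ∨ a ∈ I2) (hJu : ∀ b : β, b ∈ J1 ∨ b ∈ J2)
    (hId : Disjoint I1 I2) (hJd : Disjoint J1 J2)
    (hedges : ∀ f ∈ G.erase e, (f.1 ∈ I1 ∧ f.2 ∈ J1) ∨ (f.1 ∈ I2 ∧ f.2 ∈ J2))
    (hconn1 : ∀ x y : α ⊕ β, Sum.elim (· ∈ I1) (· ∈ J1) x →
      Sum.elim (· ∈ I1) (· ∈ J1) y → (toGraph (G.erase e)).Reachable x y)
    (hconn2 : ∀ x y : α ⊕ β, Sum.elim (· ∈ I2) (· ∈ J2) x →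
      Sum.elim (· ∈ I2) (· ∈ J2) y → (toGraph (G.erase e)).Reachable x y) :
    (e.1 ∈ I1 ∧ e.2 ∈ J2) ∨ (e.1 ∈ I2 ∧ e.2 ∈ J1) := by
  -- the second component is nonempty
  have hne2 : I2.Nonempty ∨ J2.Nonempty := by
    by_contra h
    push_neg at h
    obtain ⟨h1, h2⟩ := h
    have h1' : ∀ a : α, a ∈ I1 := by
      intro a
      rcases hIu a with ha | ha
      · exact ha
      · simp [h1] at ha
    have h2' : ∀ b : β, b ∈ J1 := by
      intro b
      rcases hJu b with hb | hb
      · exact hb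
      · simp [h2] at hb
    exact bridge hac he (hconn1 (Sum.inl e.1) (Sum.inr e.2) (h1' _) (h2' _))
  have hne1 : I1.Nonempty ∨ J1.Nonempty := by
    by_contra h
    push_neg at h
    obtain ⟨h1, h2⟩ := h
    have h1' : ∀ a : α, a ∈ I2 := by
      intro a
      rcases hIu a with ha | ha
      · simp [h1] at ha
      · exact ha
    have h2' : ∀ b : β, b ∈ J2 := by
      intro b
      rcases hJu b with hb | hb
      · simp [h2] at hb
      · exact hb
    exact bridge hac he (hconn2 (Sum.inl e.1) (Sum.inr e.2) (h1' _) (h2' _))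
  by_contra hcross
  -- then every edge of G respects the cut (I1, J1)
  have hrespG : ∀ g ∈ G, (g.1 ∈ I1 ↔ g.2 ∈ J1) := by
    intro g hg
    rcases eq_or_ne g e with rfl | hne
    · rcases hIu g.1 with h1 | h1
      · rcases hJu g.2 with h2 | h2
        · exact ⟨fun _ => h2, fun _ => h1⟩
        · exact absurd (Or.inl ⟨h1, h2⟩) hcross
      · rcases hJu g.2 with h2 | h2
        · exact absurd (Or.inr ⟨h1, h2⟩) hcross
        · constructor
          · intro hh; exact absurd hh (Finset.disjoint_right.1 hId h1)
          · intro hh; exact absurd hh (Finset.disjoint_right.1 hJd h2)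
    · have := hedges g (Finset.mem_erase.2 ⟨hne, hg⟩)
      rcases this with ⟨h1, h2⟩ | ⟨h1, h2⟩
      · exact ⟨fun _ => h2, fun _ => h1⟩
      · constructor
        · intro hh; exact absurd hh (Finset.disjoint_right.1 hId h1)
        · intro hh; exact absurd hh (Finset.disjoint_right.1 hJd h2)
  -- pick a vertex on each side, contradict connectivity
  have hside : ∀ x : α ⊕ β, Sum.elim (· ∈ I1) (· ∈ J1) x →
      ∀ y : α ⊕ β, Sum.elim (· ∈ I2) (· ∈ J2) y → False := by
    intro x hx y hy
    have := (reach_side hrespG (hconn x y)).1 hx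
    cases y with
    | inl a => exact Finset.disjoint_left.1 hId this hy
    | inr b => exact Finset.disjoint_left.1 hJd this hy
  rcases hne1 with ⟨a, ha⟩ | ⟨b, hb⟩ <;> rcases hne2 with ⟨a', ha'⟩ | ⟨b', hb'⟩
  · exact hside (Sum.inl a) ha (Sum.inl a') ha'
  · exact hside (Sum.inl a) ha (Sum.inr b') hb'
  · exact hside (Sum.inr b) hb (Sum.inl a') ha'
  · exact hside (Sum.inr b) hb (Sum.inr b') hb'

end Cross

/-- A spanning tree of the complete bipartite graph `K_{n,d}`. -/
def IsSpanningTree {n d : ℕ} (G : BGraph (Fin n) (Fin d)) : Prop :=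
  IsTreeOn G Finset.univ Finset.univ

theorem statement14 {n d : ℕ} (G G' : BGraph (Fin n) (Fin d))
    (hG : IsSpanningTree G) (hG' : IsSpanningTree G') (hne : G ≠ G')
    (e e' : Fin n × Fin d) (he : e ∈ G) (he' : e' ∈ G')
    (hH : G.erase e = G'.erase e')
    (I1 I2 : Finset (Fin n)) (J1 J2 : Finset (Fin d))
    (hIu : I1 ∪ I2 = Finset.univ) (hJu : J1 ∪ J2 = Finset.univ)
    (hId : Disjoint I1 I2) (hJd : Disjoint J1 J2)
    (hedges : ∀ f ∈ G.erase e, (f.1 ∈ I1 ∧ f.2 ∈ J1) ∨ (f.1 ∈ I2 ∧ f.2 ∈ J2))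
    (hconn1 : ∀ x y : Fin n ⊕ Fin d, Sum.elim (· ∈ I1) (· ∈ J1) x →
      Sum.elim (· ∈ I1) (· ∈ J1) y → (toGraph (G.erase e)).Reachable x y)
    (hconn2 : ∀ x y : Fin n ⊕ Fin d, Sum.elim (· ∈ I2) (· ∈ J2) x →
      Sum.elim (· ∈ I2) (· ∈ J2) y → (toGraph (G.erase e)).Reachable x y) :
    (Compatible G G' ↔
      ((e.1 ∈ I1 ∧ e.2 ∈ J2 ∧ e'.1 ∈ I2 ∧ e'.2 ∈ J1) ∨
        (e.1 ∈ I2 ∧ e.2 ∈ J1 ∧ e'.1 ∈ I1 ∧ e'.2 ∈ J2))) ∧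
    (Compatible G G' → e.1 ≠ e'.1 ∧ e.2 ≠ e'.2) := by
  have hGac : Acyclic G := hG.2.1
  have hG'ac : Acyclic G' := hG'.2.1
  have hGconn : ∀ x y : Fin n ⊕ Fin d, (toGraph G).Reachable x y := fun x y =>
    hG.2.2 x y (by cases x <;> simp) (by cases y <;> simp)
  have hG'conn : ∀ x y : Fin n ⊕ Fin d, (toGraph G').Reachable x y := fun x y =>
    hG'.2.2 x y (by cases x <;> simp) (by cases y <;> simp)
  have hee' : e ≠ e' := by
    rintro rfl
    exact hne (by rw [← Finset.insert_erase he, ← Finset.insert_erase he', hH])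
  have hIu' : ∀ a : Fin n, a ∈ I1 ∨ a ∈ I2 := fun a =>
    Finset.mem_union.1 (by rw [hIu]; exact Finset.mem_univ a)
  have hJu' : ∀ b : Fin d, b ∈ J1 ∨ b ∈ J2 := fun b =>
    Finset.mem_union.1 (by rw [hJu]; exact Finset.mem_univ b)
  have hresp1 : ∀ g ∈ G.erase e, (g.1 ∈ I1 ↔ g.2 ∈ J1) := by
    intro g hg
    rcases hedges g hg with ⟨h1, h2⟩ | ⟨h1, h2⟩
    · exact ⟨fun _ => h2, fun _ => h1⟩
    · constructor
      · intro hh; exact absurd hh (Finset.disjoint_right.1 hId h1)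
      · intro hh; exact absurd hh (Finset.disjoint_right.1 hJd h2)
  have hresp2 : ∀ g ∈ G.erase e, (g.1 ∈ I2 ↔ g.2 ∈ J2) := by
    intro g hg
    rcases hedges g hg with ⟨h1, h2⟩ | ⟨h1, h2⟩
    · constructor
      · intro hh; exact absurd hh (Finset.disjoint_left.1 hId h1)
      · intro hh; exact absurd hh (Finset.disjoint_left.1 hJd h2)
    · exact ⟨fun _ => h2, fun _ => h1⟩
  have hH' : G'.erase e' = G.erase e := hH.symm
  have hedges'' : ∀ f ∈ G'.erase e', (f.1 ∈ I1 ∧ f.2 ∈ J1) ∨ (f.1 ∈ I2 ∧ f.2 ∈ J2) :=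
    fun f hf => hedges f (hH' ▸ hf)
  have hconn1'' : ∀ x y : Fin n ⊕ Fin d, Sum.elim (· ∈ I1) (· ∈ J1) x →
      Sum.elim (· ∈ I1) (· ∈ J1) y → (toGraph (G'.erase e')).Reachable x y := by
    rw [hH']; exact hconn1
  have hconn2'' : ∀ x y : Fin n ⊕ Fin d, Sum.elim (· ∈ I2) (· ∈ J2) x →
      Sum.elim (· ∈ I2) (· ∈ J2) y → (toGraph (G'.erase e')).Reachable x y := by
    rw [hH']; exact hconn2
  have hresp1' : ∀ g ∈ G'.erase e', (g.1 ∈ I1 ↔ g.2 ∈ J1) := fun g hg =>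
    hresp1 g (hH' ▸ hg)
  have crossE := cross_of hGac hGconn he hIu' hJu' hId hJd hedges hconn1 hconn2
  have crossE' := cross_of hG'ac hG'conn he' hIu' hJu' hId hJd hedges'' hconn1'' hconn2''
  have hforward : Compatible G G' →
      ((e.1 ∈ I1 ∧ e.2 ∈ J2 ∧ e'.1 ∈ I2 ∧ e'.2 ∈ J1) ∨
        (e.1 ∈ I2 ∧ e.2 ∈ J1 ∧ e'.1 ∈ I1 ∧ e'.2 ∈ J2)) := by
    intro hc
    rcases crossE with ⟨hA1, hA2⟩ | ⟨hB1, hB2⟩ <;>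
      rcases crossE' with ⟨hA1', hA2'⟩ | ⟨hB1', hB2'⟩
    · exact absurd hc
        (incompat he he' hH hee' hId hJd hconn1 hconn2 hresp1 hresp2 hA1 hA2 hA1' hA2')
    · exact Or.inl ⟨hA1, hA2, hB1', hB2'⟩
    · exact Or.inr ⟨hB1, hB2, hA1', hA2'⟩
    · exact absurd hc
        (incompat he he' hH hee' hId.symm hJd.symm hconn2 hconn1 hresp2 hresp1
          hB1 hB2 hB1' hB2')
  have hback : ((e.1 ∈ I1 ∧ e.2 ∈ J2 ∧ e'.1 ∈ I2 ∧ e'.2 ∈ J1) ∨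
        (e.1 ∈ I2 ∧ e.2 ∈ J1 ∧ e'.1 ∈ I1 ∧ e'.2 ∈ J2)) → Compatible G G' := by
    rintro (⟨h1, h2, h3, h4⟩ | ⟨h1, h2, h3, h4⟩)
    · exact compat_core hGac he he' hH hId hJd hresp1 h1 h2 h3 h4
    · exact compat_symm (compat_core hG'ac he' he hH.symm hId hJd hresp1' h3 h4 h1 h2)
  refine ⟨⟨hforward, hback⟩, ?_⟩
  intro hc
  rcases hforward hc with ⟨h1, h2, h3, h4⟩ | ⟨h1, h2, h3, h4⟩
  · exact ⟨fun h => Finset.disjoint_left.1 hId h1 (h ▸ h3),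
      fun h => Finset.disjoint_right.1 hJd h2 (h ▸ h4)⟩
  · exact ⟨fun h => Finset.disjoint_right.1 hId h1 (h ▸ h3),
      fun h => Finset.disjoint_left.1 hJd h2 (h ▸ h4)⟩
end

section
/- If G and G' are distinct acyclic subgraphs of K_{n,d} with LD(G) = LD(G') and RD(G) = RD(G'), then G and G' are not compatible. -/
open Finset

section AuxLemmas

variable {α β : Type*} [DecidableEq α] [DecidableEq β]

lemma aux_card_sdiff_filter (G G' : BGraph α β) (p : α × β → Prop) [DecidablePred p]
    (h : (G.filter p).card = (G'.filter p).card) :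
    ((G \ G').filter p).card = ((G' \ G).filter p).card := by
  have h1 : (G.filter p).card = ((G \ G').filter p).card + ((G ∩ G').filter p).card := by
    rw [← card_union_of_disjoint (disjoint_filter_filter (disjoint_sdiff_inter G G')),
      ← filter_union, sdiff_union_inter]
  have h2 : (G'.filter p).card = ((G' \ G).filter p).card + ((G' ∩ G).filter p).card := by
    rw [← card_union_of_disjoint (disjoint_filter_filter (disjoint_sdiff_inter G' G)),
      ← filter_union, sdiff_union_inter]
  rw [inter_comm G' G] at h2
  omega


end AuxLemmas

theorem statement15 {n d : ℕ} (G G' : BGraph (Fin n) (Fin d))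
    (hG : Acyclic G) (hG' : Acyclic G') (hne : G ≠ G')
    (hLD : ∀ i, LD G i = LD G' i) (hRD : ∀ j, RD G j = RD G' j) :
    ¬ Compatible G G' := by
  classical
  intro hcomp
  -- cardinalities agree
  have hcard : G.card = G'.card := by
    rw [card_eq_sum_card_fiberwise (f := Prod.snd) (t := univ) (fun x _ => mem_univ _),
        card_eq_sum_card_fiberwise (f := Prod.snd) (t := univ) (fun x _ => mem_univ _)]
    exact Finset.sum_congr rfl fun j _ => hRD j
  -- R = red edges, B = blue edges
  have hRne : (G \ G').Nonempty := by
    rw [nonempty_iff_ne_empty]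
    intro h
    exact hne (eq_of_subset_of_card_le (sdiff_eq_empty_iff_subset.mp h) (le_of_eq hcard.symm))
  obtain ⟨a0, ha0⟩ := hRne
  -- degree transfer between red and blue
  have hR2B : ∀ j, ((G \ G').filter fun e => e.2 = j).Nonempty →
      ((G' \ G).filter fun e => e.2 = j).Nonempty := by
    intro j hj
    have h := aux_card_sdiff_filter G G' (fun e => e.2 = j) (hRD j)
    rw [← card_pos] at hj ⊢
    omega
  have hB2R : ∀ i, ((G' \ G).filter fun e => e.1 = i).Nonempty →
      ((G \ G').filter fun e => e.1 = i).Nonempty := by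
    intro i hi
    have h := aux_card_sdiff_filter G' G (fun e => e.1 = i) (hLD i).symm
    rw [← card_pos] at hi ⊢
    omega
  -- choice functions
  have hgex : ∀ j : Fin d, ∃ e : Fin n × Fin d,
      ((G \ G').filter fun x => x.2 = j).Nonempty → e ∈ G' \ G ∧ e.2 = j := by
    intro j
    by_cases hx : ((G' \ G).filter fun x => x.2 = j).Nonempty
    · obtain ⟨e, he⟩ := hx
      rw [mem_filter] at he
      exact ⟨e, fun _ => he⟩
    · exact ⟨a0, fun h => absurd (hR2B j h) hx⟩
  choose g hg using hgex
  have hvex : ∀ i : Fin n, ∃ e : Fin n × Fin d,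
      ((G' \ G).filter fun x => x.1 = i).Nonempty → e ∈ G \ G' ∧ e.1 = i := by
    intro i
    by_cases hx : ((G \ G').filter fun x => x.1 = i).Nonempty
    · obtain ⟨e, he⟩ := hx
      rw [mem_filter] at he
      exact ⟨e, fun _ => he⟩
    · exact ⟨a0, fun h => absurd (hB2R i h) hx⟩
  choose v hv using hvex
  set F : Fin n × Fin d → Fin n × Fin d := fun e => v (g e.2).1 with hFdef
  have stepg : ∀ e ∈ G \ G', g e.2 ∈ G' \ G ∧ (g e.2).2 = e.2 :=
    fun e he => hg e.2 ⟨e, mem_filter.mpr ⟨he, rfl⟩⟩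
  have stepv : ∀ f ∈ G' \ G, v f.1 ∈ G \ G' ∧ (v f.1).1 = f.1 :=
    fun f hf => hv f.1 ⟨f, mem_filter.mpr ⟨hf, rfl⟩⟩
  have stepF : ∀ e ∈ G \ G', F e ∈ G \ G' ∧ (F e).1 = (g e.2).1 := by
    intro e he
    exact ⟨(stepv _ (stepg e he).1).1, (stepv _ (stepg e he).1).2⟩
  have orbR0 : ∀ t, F^[t] a0 ∈ G \ G' := by
    intro t
    induction t with
    | zero => simpa using ha0
    | succ t ih => rw [Function.iterate_succ_apply']; exact (stepF _ ih).1
  -- find a repeat in the orbit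
  obtain ⟨s, t, hst, heq⟩ : ∃ s t : ℕ, s < t ∧ F^[s] a0 = F^[t] a0 := by
    obtain ⟨x, y, hxy, hfeq⟩ := Finite.exists_ne_map_eq_of_infinite (fun k : ℕ => F^[k] a0)
    rcases lt_or_gt_of_ne hxy with h | h
    · exact ⟨x, y, h, hfeq⟩
    · exact ⟨y, x, h, hfeq.symm⟩
  set a : Fin n × Fin d := F^[s] a0 with hadef
  have hpa : ∃ k, 0 < k ∧ F^[k] a = a := by
    refine ⟨t - s, by omega, ?_⟩
    rw [hadef, ← Function.iterate_add_apply]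
    rw [show t - s + s = t by omega]
    exact heq.symm
  set m : ℕ := Nat.find hpa with hmdef
  obtain ⟨hm0, hmfix⟩ : 0 < m ∧ F^[m] a = a := Nat.find_spec hpa
  have hmmin : ∀ k, k < m → ¬(0 < k ∧ F^[k] a = a) := fun k hk => Nat.find_min hpa hk
  have orbR : ∀ t, F^[t] a ∈ G \ G' := by
    intro t
    rw [hadef, ← Function.iterate_add_apply]
    exact orbR0 _
  -- periodicity
  have hmk : ∀ k, F^[m * k] a = a := by
    intro k
    induction k with
    | zero => simp
    | succ k ih =>
      rw [Nat.mul_succ, Function.iterate_add_apply, hmfix, ih]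
  have hmod : ∀ t, F^[t] a = F^[t % m] a := by
    intro t
    conv_lhs => rw [← Nat.mod_add_div t m, Function.iterate_add_apply, hmk]
  -- injectivity of the orbit below m
  have hinj : ∀ s t, s < m → t < m → F^[s] a = F^[t] a → s = t := by
    have key : ∀ s t, s < t → t < m → F^[s] a = F^[t] a → False := by
      intro s t h1 h2 he
      have : F^[m - t + s] a = a := by
        rw [Function.iterate_add_apply, he, ← Function.iterate_add_apply,
          show m - t + t = m by omega, hmfix]
      exact hmmin (m - t + s) (by omega) ⟨by omega, this⟩
    intro s t hs ht he
    rcases lt_trichotomy s t with h | h | h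
    · exact absurd he (by intro he; exact key s t h ht he)
    · exact h
    · exact absurd he.symm (by intro he; exact key t s h hs he)
  -- every orbit edge is recovered from its left endpoint by v
  have hedge1 : ∀ t, F^[t + 1] a = v ((F^[t + 1] a).1) := by
    intro t
    have hb := (stepg _ (orbR t)).1
    have h2 : (F (F^[t] a)).1 = (g ((F^[t] a).2)).1 := (stepv _ hb).2
    rw [Function.iterate_succ_apply', h2]
  have hedgeAll : ∀ t, F^[t] a = v ((F^[t] a).1) := by
    intro t
    cases t with
    | zero =>
      have := hedge1 (m - 1)
      rw [show m - 1 + 1 = m by omega, hmfix] at this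
      simpa using this
    | succ t => exact hedge1 t
  -- F depends only on the second coordinate
  have hF2 : ∀ e e' : Fin n × Fin d, e.2 = e'.2 → F e = F e' := by
    intro e e' h
    simp only [hFdef, h]
  have hinj1 : ∀ s t, s < m → t < m → (F^[s] a).1 = (F^[t] a).1 → s = t := by
    intro s t hs ht h
    exact hinj s t hs ht (by rw [hedgeAll s, hedgeAll t, h])
  have hmodinj : ∀ s t, s < m → t < m → F^[s + 1] a = F^[t + 1] a → s = t := by
    intro s t hs ht h1
    have h2 : F^[(s + 1) % m] a = F^[(t + 1) % m] a := by rw [← hmod, ← hmod, h1]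
    have h3 := hinj _ _ (Nat.mod_lt _ hm0) (Nat.mod_lt _ hm0) h2
    by_cases hsm : s + 1 = m <;> by_cases htm : t + 1 = m
    · omega
    · rw [hsm, Nat.mod_self, Nat.mod_eq_of_lt (by omega)] at h3; omega
    · rw [htm, Nat.mod_self, Nat.mod_eq_of_lt (by omega)] at h3; omega
    · rw [Nat.mod_eq_of_lt (by omega), Nat.mod_eq_of_lt (by omega)] at h3; omega
  have hinj2 : ∀ s t, s < m → t < m → (F^[s] a).2 = (F^[t] a).2 → s = t := by
    intro s t hs ht h
    refine hmodinj s t hs ht ?_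
    rw [Function.iterate_succ_apply', Function.iterate_succ_apply']
    exact hF2 _ _ h
  -- the blue edges
  set f : ℕ → Fin n × Fin d := fun t => g ((F^[t] a).2) with hfdef
  have hfB : ∀ t, f t ∈ G' \ G := fun t => (stepg _ (orbR t)).1
  have hf2 : ∀ t, (f t).2 = (F^[t] a).2 := fun t => (stepg _ (orbR t)).2
  have hfv : ∀ t, F^[t + 1] a = v ((f t).1) := by
    intro t
    rw [Function.iterate_succ_apply']
  have hf1 : ∀ t, (f t).1 = (F^[t + 1] a).1 := by
    intro t
    rw [hfv t]
    exact ((stepv _ (hfB t)).2).symm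
  have hfinj1 : ∀ s t, s < m → t < m → (f s).1 = (f t).1 → s = t := by
    intro s t hs ht h
    exact hmodinj s t hs ht (by rw [hfv s, hfv t, h])
  have hfinj2 : ∀ s t, s < m → t < m → (f s).2 = (f t).2 → s = t := by
    intro s t hs ht h
    rw [hf2, hf2] at h
    exact hinj2 s t hs ht h
  -- the sets
  set M : BGraph (Fin n) (Fin d) := (range m).image (fun t => F^[t] a) with hMdef
  set M' : BGraph (Fin n) (Fin d) := (range m).image f with hM'def
  set I : Finset (Fin n) := (range m).image (fun t => (F^[t] a).1) with hIdef
  set J : Finset (Fin d) := (range m).image (fun t => (F^[t] a).2) with hJdef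
  have hMG : M ⊆ G := by
    intro e he
    obtain ⟨t, -, rfl⟩ := mem_image.mp he
    exact (mem_sdiff.mp (orbR t)).1
  have hM'G' : M' ⊆ G' := by
    intro e he
    obtain ⟨t, -, rfl⟩ := mem_image.mp he
    exact (mem_sdiff.mp (hfB t)).1
  have hMmem : ∀ e, e ∈ M ↔ ∃ t < m, F^[t] a = e := by
    intro e
    simp [hMdef, mem_image]
  have hM'mem : ∀ e, e ∈ M' ↔ ∃ t < m, f t = e := by
    intro e
    simp [hM'def, mem_image]
  -- M is a matching on I, J
  have hMmatch : IsMatching M I J := by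
    refine ⟨?_, ?_, ?_⟩
    · intro e he
      obtain ⟨t, ht, rfl⟩ := (hMmem e).mp he
      exact ⟨mem_image.mpr ⟨t, mem_range.mpr ht, rfl⟩, mem_image.mpr ⟨t, mem_range.mpr ht, rfl⟩⟩
    · intro i hi
      obtain ⟨t, ht, hti⟩ := mem_image.mp hi
      rw [mem_range] at ht
      refine ⟨(F^[t] a).2, (hMmem _).mpr ⟨t, ht, by rw [← hti]⟩, ?_⟩
      · intro j hj
        obtain ⟨u, hu, huj⟩ := (hMmem (i, j)).mp hj
        have h1 : (F^[u] a).1 = (F^[t] a).1 := by rw [huj, hti]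
        have := hinj1 u t hu ht h1
        subst this
        exact (congrArg Prod.snd huj).symm
    · intro j hj
      obtain ⟨t, ht, htj⟩ := mem_image.mp hj
      rw [mem_range] at ht
      refine ⟨(F^[t] a).1, (hMmem _).mpr ⟨t, ht, by rw [← htj]⟩, ?_⟩
      · intro i hi
        obtain ⟨u, hu, hui⟩ := (hMmem (i, j)).mp hi
        have h1 : (F^[u] a).2 = (F^[t] a).2 := by rw [hui, htj]
        have := hinj2 u t hu ht h1
        subst this
        exact (congrArg Prod.fst hui).symm
  -- M' is a matching on I, J
  have hM'match : IsMatching M' I J := by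
    refine ⟨?_, ?_, ?_⟩
    · intro e he
      obtain ⟨t, ht, rfl⟩ := (hM'mem e).mp he
      constructor
      · rw [hf1 t, hmod (t + 1)]
        exact mem_image.mpr ⟨(t + 1) % m, mem_range.mpr (Nat.mod_lt _ hm0), rfl⟩
      · rw [hf2 t]
        exact mem_image.mpr ⟨t, mem_range.mpr ht, rfl⟩
    · intro i hi
      obtain ⟨t, ht, hti⟩ := mem_image.mp hi
      rw [mem_range] at ht
      -- predecessor index
      set p : ℕ := (t + m - 1) % m with hpdef
      have hpm : p < m := Nat.mod_lt _ hm0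
      have hp1 : (p + 1) % m = t := by
        rcases Nat.eq_zero_or_pos t with h0 | h0
        · have : p = m - 1 := by
            rw [hpdef, h0]
            rw [Nat.mod_eq_of_lt (by omega)]
            omega
          rw [this, show m - 1 + 1 = m by omega, Nat.mod_self, h0]
        · have : p = t - 1 := by
            rw [hpdef, show t + m - 1 = (t - 1) + m by omega, Nat.add_mod_right,
              Nat.mod_eq_of_lt (by omega)]
          rw [this, show t - 1 + 1 = t by omega, Nat.mod_eq_of_lt ht]
      have hfp1 : (f p).1 = i := by
        rw [hf1 p, hmod (p + 1), hp1, ← hti]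
      refine ⟨(f p).2, (hM'mem _).mpr ⟨p, hpm, by rw [← hfp1]⟩, ?_⟩
      · intro j hj
        obtain ⟨u, hu, huj⟩ := (hM'mem (i, j)).mp hj
        have h1 : (f u).1 = (f p).1 := by rw [huj, hfp1]
        have := hfinj1 u p hu hpm h1
        subst this
        exact (congrArg Prod.snd huj).symm
    · intro j hj
      obtain ⟨t, ht, htj⟩ := mem_image.mp hj
      rw [mem_range] at ht
      have hft2 : (f t).2 = j := by rw [hf2 t, htj]
      refine ⟨(f t).1, (hM'mem _).mpr ⟨t, ht, by rw [← hft2]⟩, ?_⟩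
      · intro i hi
        obtain ⟨u, hu, hui⟩ := (hM'mem (i, j)).mp hi
        have h1 : (f u).2 = (f t).2 := by rw [hui, hft2]
        have := hfinj2 u t hu ht h1
        subst this
        exact (congrArg Prod.fst hui).symm
  -- conclude
  have hMeq := hcomp I J M M' hMG hM'G' hMmatch hM'match
  have haM : a ∈ M := by
    rw [hMmem]
    exact ⟨0, hm0, rfl⟩
  rw [hMeq] at haM
  obtain ⟨u, hu, huf⟩ := (hM'mem a).mp haM
  have h1 : a ∈ G' := (mem_sdiff.mp (huf ▸ hfB u)).1
  have h2 : a ∉ G' := (mem_sdiff.mp (orbR 0)).2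
  exact h2 h1
end

section
/- Let {T_v} be a collection of topes, one for each lattice point v of nΔ^{d−1}, with RD(T_v) = v for each v. Suppose that for every lattice point w of (n+1)Δ^{d−1}, the union ⋃_{j̄ : w_j̄ ≥ 1} T_{w−e_j̄} is a tree on the vertex set [n] ⊔ {j̄ : w_j̄ ≥ 1} in which every vertex of [n] has degree 1 or 2. Then the combinatorial sector axiom holds: whenever v − e_j̄ = v' − e_j̄' for lattice points v, v' of nΔ^{d−1} and j̄, j̄' ∈ [d̄], one has T_{v'}^{-1}(j̄) ⊆ T_v^{-1}(j̄). -/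
open Finset

section TopeDefs

variable {n d : ℕ}

/-- The graph of a tope `T : [n] → [d]`. -/
def topeGraph (T : Fin n → Fin d) : BGraph (Fin n) (Fin d) :=
  Finset.univ.image fun i => (i, T i)

/-- The position (right degree vector) of a tope. -/
def topePos (T : Fin n → Fin d) : Fin d → ℕ :=
  fun j => (Finset.univ.filter fun i => T i = j).card

/-- Standard unit vector `e_j`. -/
def unitVec (j : Fin d) : Fin d → ℕ := fun k => if k = j then 1 else 0

end TopeDefs

/-- Support of a vector. -/
def suppF {d : ℕ} (w : Fin d → ℕ) : Finset (Fin d) :=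
  Finset.univ.filter fun j => 1 ≤ w j

/-- The union of the topes at the vertices of the upside-down simplex `w + ∇^{d-1}`. -/
def nablaUnion {n d : ℕ} (T : (Fin d → ℕ) → Fin n → Fin d) (w : Fin d → ℕ) :
    BGraph (Fin n) (Fin d) :=
  (suppF w).biUnion fun j => topeGraph (T (w - unitVec j))
open SimpleGraph in
lemma toGraph_adj {α β : Type*} [DecidableEq α] [DecidableEq β] (G : BGraph α β)
    (x y : α ⊕ β) : (toGraph G).Adj x y ↔
      (∃ a b, (a, b) ∈ G ∧ x = Sum.inl a ∧ y = Sum.inr b) ∨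
      (∃ a b, (a, b) ∈ G ∧ x = Sum.inr b ∧ y = Sum.inl a) := by
  constructor
  · rintro ⟨hne, (⟨a, b, rfl, rfl, hab⟩ | ⟨a, b, rfl, rfl, hab⟩)⟩
    · exact Or.inl ⟨a, b, hab, rfl, rfl⟩
    · exact Or.inr ⟨a, b, hab, rfl, rfl⟩
  · rintro (⟨a, b, hab, rfl, rfl⟩ | ⟨a, b, hab, rfl, rfl⟩)
    · exact ⟨by simp, Or.inl ⟨a, b, rfl, rfl, hab⟩⟩
    · exact ⟨by simp, Or.inr ⟨a, b, rfl, rfl, hab⟩⟩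

lemma acyclic_mono {α β : Type*} [DecidableEq α] [DecidableEq β] {G G' : BGraph α β}
    (hsub : G ⊆ G') (hac : Acyclic G') : Acyclic G := by
  have hle : toGraph G ≤ toGraph G' := by
    intro x y hxy
    rw [toGraph_adj] at hxy ⊢
    rcases hxy with ⟨a, b, hab, hx, hy⟩ | ⟨a, b, hab, hx, hy⟩
    · exact Or.inl ⟨a, b, hsub hab, hx, hy⟩
    · exact Or.inr ⟨a, b, hsub hab, hx, hy⟩
  intro v c hc
  exact hac (c.mapLe hle) (hc.mapLe hle)

open SimpleGraph in
lemma forest_bound {α β : Type*} [DecidableEq α] [DecidableEq β]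
    (G : BGraph α β) (hne : G.Nonempty) (hac : Acyclic G) :
    G.card + 1 ≤ (G.image Prod.fst).card + (G.image Prod.snd).card := by
  classical
  set H := toGraph G with hH
  set S : Finset (α ⊕ β) :=
    (G.image fun e => Sum.inl e.1) ∪ (G.image fun e => Sum.inr e.2) with hS
  have hScard : S.card = (G.image Prod.fst).card + (G.image Prod.snd).card := by
    rw [hS, Finset.card_union_of_disjoint]
    · congr 1
      · rw [show (G.image fun e => (Sum.inl e.1 : α ⊕ β)) = (G.image Prod.fst).image Sum.inl by
          rw [Finset.image_image]; rfl]
        exact Finset.card_image_of_injective _ Sum.inl_injective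
      · rw [show (G.image fun e => (Sum.inr e.2 : α ⊕ β)) = (G.image Prod.snd).image Sum.inr by
          rw [Finset.image_image]; rfl]
        exact Finset.card_image_of_injective _ Sum.inr_injective
    · simp [Finset.disjoint_left]
  have hmemS : ∀ {x y : α ⊕ β}, H.Adj x y → x ∈ S := by
    intro x y hxy
    rw [hH, toGraph_adj] at hxy
    rcases hxy with ⟨a, b, hab, rfl, _⟩ | ⟨a, b, hab, rfl, _⟩
    · exact Finset.mem_union_left _ (Finset.mem_image.2 ⟨(a, b), hab, rfl⟩)
    · exact Finset.mem_union_right _ (Finset.mem_image.2 ⟨(a, b), hab, rfl⟩)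
  -- roots of connected components
  set root : α ⊕ β → α ⊕ β := fun x => (H.connectedComponentMk x).out with hroot
  have hreach : ∀ x, H.Reachable x (root x) := by
    intro x
    exact (ConnectedComponent.exact (Quot.out_eq _)).symm
  have hrootfix : ∀ x, root (root x) = root x := by
    intro x
    rw [hroot]
    simp only []
    congr 1
    exact Quot.out_eq _
  have hroot_adj : ∀ {x y}, H.Adj x y → root x = root y := by
    intro x y hxy
    rw [hroot]
    simp only []
    rw [ConnectedComponent.connectedComponentMk_eq_of_adj hxy]
  -- the chosen path to the root
  have hP : ∀ x : α ⊕ β, ∃ p : H.Walk x (root x), p.IsPath := fun x =>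
    ⟨(hreach x).some.toPath, (hreach x).some.toPath.2⟩
  set P : (x : α ⊕ β) → H.Walk x (root x) := fun x => (hP x).choose with hPdef
  have hPpath : ∀ x, (P x).IsPath := fun x => (hP x).choose_spec
  set Starts : α ⊕ β → α ⊕ β → Prop := fun x y =>
    ∃ (hxy : H.Adj x y) (q : H.Walk y (root x)), P x = Walk.cons hxy q with hStarts
  have hpath_loop : ∀ {u : α ⊕ β} (p : H.Walk u u), p.IsPath → p = Walk.nil := by
    intro u p hp
    have := SimpleGraph.Path.loop_eq (⟨p, hp⟩ : H.Path u u)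
    exact congrArg Subtype.val this
  have hlen0 : ∀ {a b : α ⊕ β} (p : H.Walk a b), p.IsPath → a = b → p.length = 0 := by
    intro a b p hp hab
    subst hab
    rw [hpath_loop _ hp]
    rfl
  have hstarts_ne : ∀ {x y}, Starts x y → x ≠ root x := by
    rintro x y ⟨hxy, q, hq⟩ heq
    have h0 := hlen0 (P x) (hPpath x) heq
    rw [hq] at h0
    simp at h0
  have hstarts_snd : ∀ {x y}, Starts x y → (P x).getVert 1 = y := by
    rintro x y ⟨hxy, q, hq⟩
    rw [hq]
    simp [Walk.getVert_cons_succ]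
  have hstarts_unique : ∀ {x y₁ y₂}, Starts x y₁ → Starts x y₂ → y₁ = y₂ := by
    intro x y₁ y₂ h1 h2
    rw [← hstarts_snd h1, ← hstarts_snd h2]
  have hdichot : ∀ {a : α} {b : β}, (a, b) ∈ G →
      Starts (Sum.inl a) (Sum.inr b) ∨ Starts (Sum.inr b) (Sum.inl a) := by
    intro a b hab
    have hxy : H.Adj (Sum.inl a) (Sum.inr b) := by
      rw [hH, toGraph_adj]; exact Or.inl ⟨a, b, hab, rfl, rfl⟩
    have hre : root (Sum.inl a) = root (Sum.inr b) := hroot_adj hxy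
    obtain hx | hx := Classical.em ((Sum.inl a : α ⊕ β) ∈ (P (Sum.inr b)).support)
    · right
      have htake := (hPpath (Sum.inr b)).takeUntil hx
      have hsingle : (Walk.cons hxy.symm Walk.nil :
          H.Walk (Sum.inr b) (Sum.inl a)).IsPath := by
        simp [hxy.ne']
      have huniq := hac.path_unique
        ⟨(P (Sum.inr b)).takeUntil _ hx, htake⟩ ⟨Walk.cons hxy.symm Walk.nil, hsingle⟩
      have hval : (P (Sum.inr b)).takeUntil _ hx = Walk.cons hxy.symm Walk.nil :=
        congrArg Subtype.val huniq
      refine ⟨hxy.symm, (P (Sum.inr b)).dropUntil _ hx, ?_⟩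
      conv_lhs => rw [← Walk.take_spec (P (Sum.inr b)) hx, hval]
      simp
    · left
      have hcons : (Walk.cons hxy ((P (Sum.inr b)).copy rfl hre.symm)).IsPath := by
        rw [Walk.cons_isPath_iff]
        constructor
        · rw [Walk.isPath_copy]; exact hPpath _
        · rw [Walk.support_copy]; exact hx
      have huniq := hac.path_unique ⟨P (Sum.inl a), hPpath _⟩
        ⟨Walk.cons hxy ((P (Sum.inr b)).copy rfl hre.symm), hcons⟩
      exact ⟨hxy, (P (Sum.inr b)).copy rfl hre.symm, congrArg Subtype.val huniq⟩
  obtain ⟨e₀, he₀⟩ := hne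
  set r₀ := root (Sum.inl e₀.1) with hr₀
  have hr₀S : r₀ ∈ S := by
    by_cases hcase : r₀ = Sum.inl e₀.1
    · rw [hcase]
      exact Finset.mem_union_left _ (Finset.mem_image.2 ⟨e₀, he₀, rfl⟩)
    · have hnn : ¬ ((hreach (Sum.inl e₀.1)).some.reverse).Nil :=
        Walk.not_nil_of_ne hcase
      exact hmemS (Walk.adj_snd hnn)
  set φ : α × β → α ⊕ β := fun e =>
    if Starts (Sum.inl e.1) (Sum.inr e.2) then Sum.inl e.1 else Sum.inr e.2 with hφ
  have hφ_starts : ∀ e ∈ G, ∃ y, Starts (φ e) y := by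
    intro e he
    have he' : (e.1, e.2) ∈ G := by rwa [Prod.mk.eta]
    by_cases hc : Starts (Sum.inl e.1) (Sum.inr e.2)
    · rw [hφ]; dsimp only; rw [if_pos hc]; exact ⟨_, hc⟩
    · rw [hφ]; dsimp only; rw [if_neg hc]
      exact ⟨_, (hdichot he').resolve_left hc⟩
  have hφ_mem : ∀ e ∈ G, φ e ∈ S.erase r₀ := by
    intro e he
    rw [Finset.mem_erase]
    constructor
    · obtain ⟨y, hy⟩ := hφ_starts e he
      intro heq
      apply hstarts_ne hy
      rw [heq, hr₀]
      exact (hrootfix _).symm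
    · rw [hφ]; dsimp only
      split
      · exact Finset.mem_union_left _ (Finset.mem_image.2 ⟨e, he, rfl⟩)
      · exact Finset.mem_union_right _ (Finset.mem_image.2 ⟨e, he, rfl⟩)
  have hinj : Set.InjOn φ ↑G := by
    intro e₁ h₁ e₂ h₂ heq
    have h₁' : (e₁.1, e₁.2) ∈ G := by rwa [Prod.mk.eta]
    have h₂' : (e₂.1, e₂.2) ∈ G := by rwa [Prod.mk.eta]
    rw [hφ] at heq; dsimp only at heq
    by_cases c₁ : Starts (Sum.inl e₁.1) (Sum.inr e₁.2) <;>
      by_cases c₂ : Starts (Sum.inl e₂.1) (Sum.inr e₂.2)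
    · rw [if_pos c₁, if_pos c₂] at heq
      have ha : e₁.1 = e₂.1 := Sum.inl_injective heq
      have hb : Sum.inr e₁.2 = (Sum.inr e₂.2 : α ⊕ β) := by
        apply hstarts_unique c₁
        rw [ha]; exact c₂
      exact Prod.ext ha (Sum.inr_injective hb)
    · rw [if_pos c₁, if_neg c₂] at heq; exact absurd heq (by simp)
    · rw [if_neg c₁, if_pos c₂] at heq; exact absurd heq (by simp)
    · rw [if_neg c₁, if_neg c₂] at heq
      have hb : e₁.2 = e₂.2 := Sum.inr_injective heq
      have s₁ := (hdichot h₁').resolve_left c₁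
      have s₂ := (hdichot h₂').resolve_left c₂
      have ha : Sum.inl e₁.1 = (Sum.inl e₂.1 : α ⊕ β) := by
        apply hstarts_unique s₁
        rw [hb]; exact s₂
      exact Prod.ext (Sum.inl_injective ha) hb
  have hcard := Finset.card_le_card_of_injOn φ hφ_mem hinj
  rw [Finset.card_erase_of_mem hr₀S] at hcard
  have hS1 : 1 ≤ S.card := Finset.card_pos.2 ⟨r₀, hr₀S⟩
  rw [← hScard]
  omega
lemma filter_snd_image_card {α β : Type*} [DecidableEq α] [DecidableEq β]
    (D : Finset α) (F : α → β) (l : β) :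
    ((D.image fun i => (i, F i)).filter fun e => e.2 = l).card
      = (D.filter fun i => F i = l).card := by
  have himg : (D.image fun i => (i, F i)).filter (fun e => e.2 = l)
      = (D.filter fun i => F i = l).image (fun i => (i, F i)) := by
    ext ⟨a, b⟩
    simp only [Finset.mem_filter, Finset.mem_image, Prod.mk.injEq]
    constructor
    · rintro ⟨⟨i', hi', rfl, rfl⟩, rfl⟩
      exact ⟨i', ⟨hi', rfl⟩, rfl, rfl⟩
    · rintro ⟨i', ⟨hi', hFi⟩, rfl, rfl⟩
      exact ⟨⟨i', hi', rfl, rfl⟩, hFi⟩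
  rw [himg, Finset.card_image_of_injective _ (fun a b hab => congrArg Prod.fst hab)]
theorem statement16 {n d : ℕ} (T : (Fin d → ℕ) → Fin n → Fin d)
    (hpos : ∀ v : Fin d → ℕ, (∑ j, v j) = n → topePos (T v) = v)
    (hnabla : ∀ w : Fin d → ℕ, (∑ j, w j) = n + 1 →
      IsTreeOn (nablaUnion T w) Finset.univ (suppF w) ∧
        ∀ i : Fin n, 1 ≤ LD (nablaUnion T w) i ∧ LD (nablaUnion T w) i ≤ 2)
    (u : Fin d → ℕ) (hu : (∑ k, u k) + 1 = n) (j j' : Fin d) (i : Fin n)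
    (h : T (u + unitVec j') i = j) : T (u + unitVec j) i = j := by
  classical
  by_cases hjj : j = j'
  · subst hjj; exact h
  by_contra hAij
  set A := T (u + unitVec j) with hA
  set B := T (u + unitVec j') with hB
  set w := u + unitVec j + unitVec j' with hw
  have hsum_unit : ∀ l : Fin d, ∑ k, unitVec (d := d) l k = 1 := by
    intro l; simp [unitVec]
  have hsw : ∑ k, w k = n + 1 := by
    simp only [hw, Pi.add_apply, Finset.sum_add_distrib, hsum_unit]
    omega
  have hsv : ∑ k, (u + unitVec j) k = n := by
    simp only [Pi.add_apply, Finset.sum_add_distrib, hsum_unit]; omega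
  have hsv' : ∑ k, (u + unitVec j') k = n := by
    simp only [Pi.add_apply, Finset.sum_add_distrib, hsum_unit]; omega
  have hjw : j ∈ suppF w := by
    simp only [suppF, Finset.mem_filter, Finset.mem_univ, true_and, hw,
      Pi.add_apply, unitVec]
    split_ifs <;> omega
  have hj'w : j' ∈ suppF w := by
    simp only [suppF, Finset.mem_filter, Finset.mem_univ, true_and, hw,
      Pi.add_apply, unitVec]
    split_ifs <;> omega
  have hwj : w - unitVec j' = u + unitVec j := by
    funext k
    simp only [hw, Pi.sub_apply, Pi.add_apply, unitVec]
    split_ifs <;> omega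
  have hwj' : w - unitVec j = u + unitVec j' := by
    funext k
    simp only [hw, Pi.sub_apply, Pi.add_apply, unitVec]
    split_ifs <;> omega
  have hUsub_A : topeGraph A ⊆ nablaUnion T w := by
    intro e he
    exact Finset.mem_biUnion.2 ⟨j', hj'w, by rwa [hwj]⟩
  have hUsub_B : topeGraph B ⊆ nablaUnion T w := by
    intro e he
    exact Finset.mem_biUnion.2 ⟨j, hjw, by rwa [hwj']⟩
  have hacU : Acyclic (nablaUnion T w) := ((hnabla w hsw).1).2.1
  have hposA : topePos A = u + unitVec j := hpos _ hsv
  have hposB : topePos B = u + unitVec j' := hpos _ hsv'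
  set D : Finset (Fin n) := Finset.univ.filter (fun i => A i ≠ B i) with hD
  have hiD : i ∈ D := by
    simp only [hD, Finset.mem_filter, Finset.mem_univ, true_and]
    rw [show B i = j from h]
    exact hAij
  set GA := D.image (fun i => (i, A i)) with hGA
  set GB := D.image (fun i => (i, B i)) with hGB
  set G' : BGraph (Fin n) (Fin d) := GA ∪ GB with hG'
  have hdisj : Disjoint GA GB := by
    rw [Finset.disjoint_left]
    rintro ⟨a, b⟩ hA' hB'
    rw [hGA, Finset.mem_image] at hA'
    rw [hGB, Finset.mem_image] at hB'
    obtain ⟨i₁, hi₁, he₁⟩ := hA'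
    obtain ⟨i₂, hi₂, he₂⟩ := hB'
    rw [Prod.mk.injEq] at he₁ he₂
    obtain ⟨rfl, rfl⟩ := he₁
    obtain ⟨rfl, hBe⟩ := he₂
    rw [hD, Finset.mem_filter] at hi₁
    exact hi₁.2 hBe.symm
  have hsubU : G' ⊆ nablaUnion T w := by
    intro e he
    rcases Finset.mem_union.1 he with h' | h'
    · obtain ⟨i', _, rfl⟩ := Finset.mem_image.1 h'
      exact hUsub_A (Finset.mem_image.2 ⟨i', Finset.mem_univ _, rfl⟩)
    · obtain ⟨i', _, rfl⟩ := Finset.mem_image.1 h'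
      exact hUsub_B (Finset.mem_image.2 ⟨i', Finset.mem_univ _, rfl⟩)
  have hacG' : Acyclic G' := acyclic_mono hsubU hacU
  have hinjA : Function.Injective (fun i : Fin n => (i, A i)) :=
    fun a b hab => congrArg Prod.fst hab
  have hinjB : Function.Injective (fun i : Fin n => (i, B i)) :=
    fun a b hab => congrArg Prod.fst hab
  have hcardG' : G'.card = 2 * D.card := by
    rw [hG', Finset.card_union_of_disjoint hdisj, hGA, hGB,
      Finset.card_image_of_injective _ hinjA, Finset.card_image_of_injective _ hinjB]
    ring
  have himfst : G'.image Prod.fst = D := by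
    ext a
    simp only [hG', hGA, hGB, Finset.image_union, Finset.image_image,
      Finset.mem_union, Finset.mem_image]
    constructor
    · rintro (⟨i', hi', rfl⟩ | ⟨i', hi', rfl⟩) <;> exact hi'
    · intro ha; exact Or.inl ⟨a, ha, rfl⟩
  -- fiber counts
  set f : Fin d → ℕ := fun l => (D.filter (fun i => A i = l)).card with hf
  set g : Fin d → ℕ := fun l => (D.filter (fun i => B i = l)).card with hg
  set E : Finset (Fin n) := Finset.univ.filter (fun i => A i = B i) with hE
  set c : Fin d → ℕ := fun l => (E.filter (fun i => B i = l)).card with hc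
  have hDEdisj : ∀ l : Fin d, Disjoint (D.filter (fun i => A i = l))
      (E.filter (fun i => B i = l)) := by
    intro l
    rw [Finset.disjoint_left]
    intro a ha hb
    rw [Finset.mem_filter, hD, Finset.mem_filter] at ha
    rw [Finset.mem_filter, hE, Finset.mem_filter] at hb
    exact ha.1.2 hb.1.2
  have hfc : ∀ l, f l + c l = topePos A l := by
    intro l
    have hsplit : Finset.univ.filter (fun i' => A i' = l) =
        (D.filter fun i' => A i' = l) ∪ (E.filter fun i' => B i' = l) := by
      ext i'
      simp only [Finset.mem_filter, Finset.mem_union, Finset.mem_univ, true_and, hD, hE]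
      by_cases hAB : A i' = B i'
      · rw [hAB]; tauto
      · tauto
    rw [topePos, hsplit, Finset.card_union_of_disjoint (hDEdisj l)]
  have hgc : ∀ l, g l + c l = topePos B l := by
    intro l
    have hsplit : Finset.univ.filter (fun i' => B i' = l) =
        (D.filter fun i' => B i' = l) ∪ (E.filter fun i' => B i' = l) := by
      ext i'
      simp only [Finset.mem_filter, Finset.mem_union, Finset.mem_univ, true_and, hD, hE]
      by_cases hAB : A i' = B i' <;> tauto
    have hdisj2 : Disjoint (D.filter (fun i' => B i' = l))
        (E.filter (fun i' => B i' = l)) := by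
      rw [Finset.disjoint_left]
      intro a ha hb
      rw [Finset.mem_filter, hD, Finset.mem_filter] at ha
      rw [Finset.mem_filter, hE, Finset.mem_filter] at hb
      exact ha.1.2 hb.1.2
    rw [topePos, hsplit, Finset.card_union_of_disjoint hdisj2]
  have hjj' : j' ≠ j := fun hh => hjj hh.symm
  have hvj : topePos A j = topePos B j + 1 := by
    rw [hposA, hposB]
    simp [unitVec, hjj, hjj']
  have hvj' : topePos B j' = topePos A j' + 1 := by
    rw [hposA, hposB]
    simp [unitVec, hjj, hjj']
  have hvl : ∀ l, l ≠ j → l ≠ j' → topePos A l = topePos B l := by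
    intro l hlj hlj'
    rw [hposA, hposB]
    simp [unitVec, hlj, hlj']
  have hfgj : f j = g j + 1 := by have h1 := hfc j; have h2 := hgc j; omega
  have hfgj' : g j' = f j' + 1 := by have h1 := hfc j'; have h2 := hgc j'; omega
  have hfgl : ∀ l, l ≠ j → l ≠ j' → f l = g l := by
    intro l h1 h2
    have h3 := hfc l; have h4 := hgc l; have h5 := hvl l h1 h2; omega
  have hgj1 : 1 ≤ g j := by
    rw [hg]
    refine Finset.card_pos.2 ⟨i, Finset.mem_filter.2 ⟨hiD, h⟩⟩
  -- right degrees
  have hRD : ∀ l, RD G' l = f l + g l := by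
    intro l
    rw [show RD G' l = ((GA ∪ GB).filter fun e => e.2 = l).card from rfl, Finset.filter_union,
      Finset.card_union_of_disjoint
        (hdisj.mono (Finset.filter_subset _ _) (Finset.filter_subset _ _)),
      hGA, hGB, filter_snd_image_card, filter_snd_image_card]
  set R := G'.image Prod.snd with hR
  have hsum : ∑ l ∈ R, RD G' l = G'.card := by
    exact (Finset.card_eq_sum_card_fiberwise
      (fun e he => Finset.mem_image.2 ⟨e, he, rfl⟩)).symm
  have hjR : j ∈ R := by
    have hmem : (i, B i) ∈ G' :=
      Finset.mem_union.2 (Or.inr (Finset.mem_image.2 ⟨i, hiD, rfl⟩))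
    exact Finset.mem_image.2 ⟨(i, B i), hmem, h⟩
  have hj'R : j' ∈ R := by
    have hgj'1 : 1 ≤ g j' := by omega
    rw [hg] at hgj'1
    obtain ⟨i', hi'⟩ := Finset.card_pos.1 hgj'1
    rw [Finset.mem_filter] at hi'
    have hmem : (i', B i') ∈ G' :=
      Finset.mem_union.2 (Or.inr (Finset.mem_image.2 ⟨i', hi'.1, rfl⟩))
    exact Finset.mem_image.2 ⟨(i', B i'), hmem, hi'.2⟩
  have hj'Re : j' ∈ R.erase j := Finset.mem_erase.2 ⟨fun hh => hjj hh.symm, hj'R⟩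
  have hrest : ∀ l ∈ (R.erase j).erase j', 2 ≤ RD G' l := by
    intro l hl
    have hlj' : l ≠ j' := (Finset.mem_erase.1 hl).1
    have hlj : l ≠ j := (Finset.mem_erase.1 (Finset.mem_erase.1 hl).2).1
    have hlR : l ∈ R := (Finset.mem_erase.1 (Finset.mem_erase.1 hl).2).2
    have h1 : 1 ≤ RD G' l := by
      obtain ⟨e, he, rfl⟩ := Finset.mem_image.1 hlR
      exact Finset.card_pos.2 ⟨e, Finset.mem_filter.2 ⟨he, rfl⟩⟩
    rw [hRD] at h1 ⊢
    have := hfgl l hlj hlj'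
    omega
  have hsplit2 : ∑ l ∈ R, RD G' l
      = RD G' j + (RD G' j' + ∑ l ∈ (R.erase j).erase j', RD G' l) := by
    rw [Finset.add_sum_erase _ _ hj'Re, Finset.add_sum_erase _ _ hjR]
  have hsumlow : ((R.erase j).erase j').card * 2 ≤ ∑ l ∈ (R.erase j).erase j', RD G' l := by
    have := Finset.card_nsmul_le_sum ((R.erase j).erase j') (RD G') 2 hrest
    rwa [smul_eq_mul] at this
  have hcarde1 : ((R.erase j).erase j').card = (R.erase j).card - 1 :=
    Finset.card_erase_of_mem hj'Re
  have hcarde2 : (R.erase j).card = R.card - 1 := Finset.card_erase_of_mem hjR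
  have hR2 : 2 ≤ R.card := by
    have hsub : ({j, j'} : Finset (Fin d)) ⊆ R := by
      intro l hl
      rcases Finset.mem_insert.1 hl with rfl | hl
      · exact hjR
      · rw [Finset.mem_singleton.1 hl]; exact hj'R
    have := Finset.card_le_card hsub
    rwa [Finset.card_pair hjj] at this
  have hGne : G'.Nonempty :=
    ⟨(i, A i), Finset.mem_union.2 (Or.inl (Finset.mem_image.2 ⟨i, hiD, rfl⟩))⟩
  have hforest := forest_bound G' hGne hacG'
  rw [himfst, ← hR] at hforest
  have h3 : 3 ≤ RD G' j := by rw [hRD]; omega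
  have h1' : 1 ≤ RD G' j' := by rw [hRD]; omega
  omega
end
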